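/- Let γ and σ be timing functions of length n. For every reverse chronological co-operative sequence of mixed moves m' aligning γ to σ, there exists a reverse chronological, co-operative, and cross co-operative sequence m aligning γ to σ with cost(m) ≤ cost(m'). -/

import Mathlib

open Finset

namespace TimedAlign

variable {n : ℕ}

/-- The stamp move `stamp(γ, x, i)`: shift the timestamp at position `i` by `x`. -/
def stamp (γ : Fin n → ℝ) (x : ℝ) (i : Fin n) : Fin n → ℝ :=
  fun j => if j = i then γ j + x else γ j

/-- The delay move `delay(γ, x, i)`: shift all timestamps at positions `≥ i` by `x`. -/
def delay (γ : Fin n → ℝ) (x : ℝ) (i : Fin n) : Fin n → ℝ :=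
  fun j => if i ≤ j then γ j + x else γ j

/-- The mixed move `(s, d, i)`: a delay move followed by a stamp move at the same position. -/
def mixed (s d : ℝ) (i : Fin n) (γ : Fin n → ℝ) : Fin n → ℝ :=
  stamp (delay γ d i) s i

/-- The timestamp preceding position `i` (with the convention `τ(0) = 0`). -/
def prev (τ : Fin n → ℝ) (i : Fin n) : ℝ :=
  if (i : ℕ) = 0 then 0
  else τ ⟨(i : ℕ) - 1, lt_of_le_of_lt (Nat.sub_le _ _) i.isLt⟩

/-- The flow function of a timing function: `f_τ(1) = τ(1)`, `f_τ(i) = τ(i) - τ(i-1)`. -/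
def flow (τ : Fin n → ℝ) (i : Fin n) : ℝ := τ i - prev τ i

/-- Elementary moves: stamp moves and delay moves. -/
inductive Move (n : ℕ) where
  | stampM (x : ℝ) (i : Fin n)
  | delayM (x : ℝ) (i : Fin n)

def Move.apply : Move n → (Fin n → ℝ) → (Fin n → ℝ)
  | .stampM x i, γ => stamp γ x i
  | .delayM x i, γ => delay γ x i

def Move.cost : Move n → ℝ
  | .stampM x _ => |x|
  | .delayM x _ => |x|

/-- Apply a sequence of moves `m₁ m₂ ⋯ m_k`, with `m₁` first. -/
def applySeq (ms : List (Move n)) (γ : Fin n → ℝ) : Fin n → ℝ :=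
  ms.foldl (fun τ m => m.apply τ) γ

/-- The cost of a sequence of moves is the sum of the costs of its moves. -/
def seqCost (ms : List (Move n)) : ℝ := (ms.map Move.cost).sum

/-- The mixed-moves distance `d_N`: the minimum cost over all finite sequences of
stamp and delay moves aligning `τ₁` to `τ₂`. -/
noncomputable def dN (τ₁ τ₂ : Fin n → ℝ) : ℝ :=
  sInf {c : ℝ | ∃ ms : List (Move n), applySeq ms τ₁ = τ₂ ∧ seqCost ms = c}

/-- Apply the chronological sequence of mixed moves `(s₁,d₁,1)(s₂,d₂,2)⋯(s_n,d_n,n)`,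
in increasing order of positions. -/
def chronApply (s d : Fin n → ℝ) (γ : Fin n → ℝ) : Fin n → ℝ :=
  (List.finRange n).foldl (fun τ i => mixed (s i) (d i) i τ) γ

/-- Apply the reverse chronological sequence `(s_n,d_n,n)⋯(s₁,d₁,1)`,
in decreasing order of positions. -/
def revChronApply (s d : Fin n → ℝ) (γ : Fin n → ℝ) : Fin n → ℝ :=
  (List.finRange n).reverse.foldl (fun τ i => mixed (s i) (d i) i τ) γ

/-- The cost of a (reverse) chronological sequence of mixed moves. -/
def chronCost (s d : Fin n → ℝ) : ℝ := ∑ i, (|s i| + |d i|)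

/-- A sequence of mixed moves is co-operative if each move has `s·d ≥ 0`. -/
def Cooperative (s d : Fin n → ℝ) : Prop := ∀ i, 0 ≤ s i * d i

/-- The move at the last position is a pure delay (`s_n = 0`). -/
def LastStampZero (s : Fin n → ℝ) : Prop := ∀ i : Fin n, (i : ℕ) + 1 = n → s i = 0

/-- Cross co-operation: `s_i · d_{i+1} ≤ 0` for all `i < n`. -/
def CrossCooperative (s d : Fin n → ℝ) : Prop :=
  ∀ i : Fin n, ∀ h : (i : ℕ) + 1 < n, s i * d ⟨(i : ℕ) + 1, h⟩ ≤ 0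

/-- The stable choice of stamp given error `e` at the current position and
residual `r` at the next position. -/
noncomputable def stableStamp (e r : ℝ) : ℝ :=
  if 0 ≤ e * r then 0 else if |e| < |r| then e else -r

/-- Stability of the stamp components of a reverse chronological co-operative run
aligning `γ` to `σ`: writing `e_i = f_σ(i) - f_γ(i)` and `r_{i+1} = e_{i+1} - s_{i+1}`,
`s_i = 0` if `e_i·r_{i+1} ≥ 0`, `s_i = e_i` if moreover `|e_i| < |r_{i+1}|`,
and `s_i = -r_{i+1}` otherwise. -/
def Stable (γ σ s : Fin n → ℝ) : Prop :=
  ∀ i : Fin n, ∀ h : (i : ℕ) + 1 < n,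
    s i = stableStamp (flow σ i - flow γ i)
      ((flow σ ⟨(i : ℕ) + 1, h⟩ - flow γ ⟨(i : ℕ) + 1, h⟩) - s ⟨(i : ℕ) + 1, h⟩)

/-- `s_{i-1}`, with the convention `s₀ = 0`. -/
def sprev (s : Fin n → ℝ) (i : Fin n) : ℝ :=
  if (i : ℕ) = 0 then 0
  else s ⟨(i : ℕ) - 1, lt_of_le_of_lt (Nat.sub_le _ _) i.isLt⟩

noncomputable def resid (e r : ℝ) : ℝ :=
  if 0 ≤ e * r then e else if |e| < |r| then 0 else e + r

noncomputable def rhoF (n : ℕ) (E : ℕ → ℝ) (k : ℕ) : ℝ :=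
  if h : k < n then resid (E k) (rhoF n E (k+1)) else 0
termination_by n - k
decreasing_by omega

lemma rhoF_pos {E : ℕ → ℝ} {k : ℕ} (h : k < n) :
    rhoF n E k = resid (E k) (rhoF n E (k+1)) := by rw [rhoF, dif_pos h]

lemma rhoF_neg {E : ℕ → ℝ} {k : ℕ} (h : ¬ k < n) : rhoF n E k = 0 := by
  rw [rhoF, dif_neg h]

noncomputable def EF (γ σ : Fin n → ℝ) : ℕ → ℝ :=
  fun k => if h : k < n then flow σ ⟨k, h⟩ - flow γ ⟨k, h⟩ else 0

noncomputable def natF (f : Fin n → ℝ) : ℕ → ℝ :=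
  fun k => if h : k < n then f ⟨k, h⟩ else 0

lemma foldl_mixed (l : List (Fin n)) (s d : Fin n → ℝ) (γ : Fin n → ℝ) (j : Fin n) :
    (l.foldl (fun τ i => mixed (s i) (d i) i τ) γ) j
      = γ j + (l.map (fun i => (if j = i then s i else 0) + (if i ≤ j then d i else 0))).sum := by
  induction l generalizing γ with
  | nil => simp
  | cons a l ih =>
      simp only [List.foldl_cons, List.map_cons, List.sum_cons]
      rw [ih]
      have h : mixed (s a) (d a) a γ j
          = γ j + ((if j = a then s a else 0) + (if a ≤ j then d a else 0)) := by
        unfold mixed stamp delay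
        by_cases h1 : j = a
        · have h2 : a ≤ j := h1 ▸ le_refl j
          simp [h1, h2]; ring
        · by_cases h2 : a ≤ j <;> simp [h1, h2]
      rw [h]; ring

lemma revChron_apply (s d : Fin n → ℝ) (γ : Fin n → ℝ) (j : Fin n) :
    revChronApply s d γ j = γ j + s j + ∑ i : Fin n, (if i ≤ j then d i else 0) := by
  unfold revChronApply
  rw [foldl_mixed]
  rw [List.map_reverse, List.sum_reverse]
  rw [← Fin.sum_univ_def]
  rw [Finset.sum_add_distrib, Fintype.sum_ite_eq]
  ring

lemma abs_add_of_mul_nonneg {e r : ℝ} (h : 0 ≤ e * r) : |e + r| = |e| + |r| := by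
  rcases le_total 0 e with he | he <;> rcases le_total 0 r with hr | hr
  · rw [abs_of_nonneg he, abs_of_nonneg hr, abs_of_nonneg (by linarith)]
  · have h0 : e * r = 0 := le_antisymm (by nlinarith) h
    rcases mul_eq_zero.1 h0 with h1 | h1 <;> simp [h1]
  · have h0 : e * r = 0 := le_antisymm (by nlinarith) h
    rcases mul_eq_zero.1 h0 with h1 | h1 <;> simp [h1]
  · rw [abs_of_nonpos he, abs_of_nonpos hr, abs_of_nonpos (by linarith)]; ring

lemma opp {s r : ℝ} (h1 : s * r ≤ 0) (h2 : |s| ≤ |r|) :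
    |r + s| ≤ |r| - |s| ∧ 0 ≤ (r + s) * r ∧ s * (r + s) ≤ 0 := by
  rcases le_total 0 s with hs | hs <;> rcases le_total 0 r with hr | hr
  · have h0 : s * r = 0 := le_antisymm h1 (mul_nonneg hs hr)
    rcases mul_eq_zero.1 h0 with h | h
    · subst h; refine ⟨by simp, by nlinarith, by simp⟩
    · have hs0 : s = 0 := abs_nonpos_iff.mp (by simpa [h] using h2)
      subst hs0; subst h; simp
  · rw [abs_of_nonneg hs, abs_of_nonpos hr] at h2
    have hrs : r + s ≤ 0 := by linarith
    refine ⟨?_, by nlinarith, by nlinarith⟩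
    rw [abs_of_nonpos hrs, abs_of_nonneg hs, abs_of_nonpos hr]; linarith
  · rw [abs_of_nonpos hs, abs_of_nonneg hr] at h2
    have hrs : 0 ≤ r + s := by linarith
    refine ⟨?_, by nlinarith, by nlinarith⟩
    rw [abs_of_nonneg hrs, abs_of_nonpos hs, abs_of_nonneg hr]; linarith
  · have h0 : s * r = 0 := le_antisymm h1 (by nlinarith)
    rcases mul_eq_zero.1 h0 with h | h
    · subst h; refine ⟨by simp, by nlinarith, by simp⟩
    · have hs0 : s = 0 := abs_nonpos_iff.mp (by simpa [h] using h2)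
      subst hs0; subst h; simp

lemma resid_facts (e r : ℝ) :
    0 ≤ e * resid e r ∧ |resid e r| ≤ |e| ∧
      (e - resid e r) * r ≤ 0 ∧ |e - resid e r| ≤ |r| := by
  unfold resid; split_ifs with h1 h2
  · exact ⟨mul_self_nonneg e, le_refl _, by simp, by simp [abs_nonneg]⟩
  · refine ⟨by simp, by simp [abs_nonneg], by simpa using (not_le.1 h1).le, by simpa using h2.le⟩
  · have h1' : e * r ≤ 0 := (not_le.1 h1).le
    have h2' : |r| ≤ |e| := not_lt.1 h2
    have o := opp (show r * e ≤ 0 by rw [mul_comm]; exact h1') h2'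
    refine ⟨by nlinarith [o.2.1], by linarith [o.1, abs_nonneg r], ?_, ?_⟩
    · have : e - (e + r) = -r := by ring
      rw [this]; nlinarith [mul_self_nonneg r]
    · rw [show e - (e + r) = -r by ring, abs_neg]

lemma coop_helper {e ρ : ℝ} (h1 : 0 ≤ e * ρ) (h2 : |ρ| ≤ |e|) : 0 ≤ (e - ρ) * ρ := by
  have h3 : |ρ| * |ρ| ≤ |ρ| * |e| := mul_le_mul_of_nonneg_left h2 (abs_nonneg ρ)
  have h4 : |ρ| * |e| = |ρ * e| := (abs_mul ρ e).symm
  have h5 : |ρ * e| = ρ * e := abs_of_nonneg (by linarith [mul_comm e ρ, h1])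
  nlinarith [abs_mul_abs_self ρ]

lemma resid_zero (e : ℝ) : resid e 0 = e := by unfold resid; simp

lemma core (e r y z : ℝ) :
    |resid e r| + |z + resid e r| + |z| ≤
      2*|y| + 2*|z - y| + |e + y + r| + |e + y| - |r| := by
  have k4 : |z| ≤ |z - y| + |y| := by
    have := abs_add_le (z - y) y; rw [show z - y + y = z by ring] at this; exact this
  unfold resid; split_ifs with h1 h2
  · have k1 : |e + r| = |e| + |r| := abs_add_of_mul_nonneg h1
    have k2 : |e + r| ≤ |e + y + r| + |y| := by
      have := abs_add_le (e + y + r) (-y)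
      rw [abs_neg, show e + y + r + -y = e + r by ring] at this; exact this
    have k3 : |z + e| ≤ |z - y| + |e + y| := by
      have := abs_add_le (z - y) (e + y)
      rw [show z - y + (e + y) = z + e by ring] at this; exact this
    linarith
  · have kr : |r| ≤ |e + y + r| + |e + y| := by
      have := abs_add_le (e + y + r) (-(e + y))
      rw [abs_neg, show e + y + r + -(e + y) = r by ring] at this; exact this
    simp only [abs_zero, add_zero]
    linarith
  · have h1' : e * r ≤ 0 := (not_le.1 h1).le
    have h2' : |r| ≤ |e| := not_lt.1 h2
    have o1 : |e + r| ≤ |e| - |r| :=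
      (opp (show r * e ≤ 0 by rw [mul_comm]; exact h1') h2').1
    have k5 : |z + (e + r)| ≤ |z - y| + |e + y + r| := by
      have := abs_add_le (z - y) (e + y + r)
      rw [show z - y + (e + y + r) = z + (e + r) by ring] at this; exact this
    have k6 : |e| ≤ |e + y| + |y| := by
      have := abs_add_le (e + y) (-y)
      rw [abs_neg, show e + y + -y = e by ring] at this; exact this
    linarith

lemma resid_le (e r : ℝ) : 2 * |resid e r| ≤ |e + r| + |e| - |r| := by
  unfold resid; split_ifs with h1 h2
  · rw [abs_add_of_mul_nonneg h1]; linarith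
  · have kr : |r| ≤ |e + r| + |e| := by
      have := abs_add_le (e + r) (-e)
      rw [abs_neg, show e + r + -e = r by ring] at this; exact this
    simp only [abs_zero]; linarith
  · have h1' : e * r ≤ 0 := (not_le.1 h1).le
    have h2' : |r| ≤ |e| := not_lt.1 h2
    have o1 : |e + r| ≤ |e| - |r| :=
      (opp (show r * e ≤ 0 by rw [mul_comm]; exact h1') h2').1
    linarith


lemma sum_le_range (f : Fin n → ℝ) (j : Fin n) :
    (∑ i : Fin n, if i ≤ j then f i else 0)
      = ∑ k ∈ Finset.range ((j : ℕ) + 1), natF f k := by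
  have h0 : (∑ i : Fin n, if i ≤ j then f i else 0)
      = ∑ i : Fin n, (fun k => if k ≤ (j : ℕ) then natF f k else 0) (i : ℕ) := by
    apply Finset.sum_congr rfl
    intro i _
    simp only [natF, i.isLt, dif_pos, Fin.eta, Fin.le_def]
  rw [h0, Fin.sum_univ_eq_sum_range (fun k => if k ≤ (j : ℕ) then natF f k else 0) n]
  rw [← Finset.sum_subset (Finset.range_subset_range.mpr j.isLt)
    (fun x _ hx => if_neg (fun hc => hx (Finset.mem_range.mpr (Nat.lt_succ_of_le hc))))]
  apply Finset.sum_congr rfl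
  intro k hk
  exact if_pos (Nat.lt_succ_iff.mp (Finset.mem_range.mp hk))

lemma align_iff (γ σ s d : Fin n → ℝ) :
    revChronApply s d γ = σ ↔ ∀ j : Fin n,
      ∑ k ∈ Finset.range ((j : ℕ) + 1), natF d k = σ j - γ j - s j := by
  constructor
  · intro h j
    have := congrFun h j
    rw [revChron_apply, sum_le_range] at this
    linarith
  · intro h
    funext j
    rw [revChron_apply, sum_le_range, h j]
    ring

lemma tele (γ σ : Fin n → ℝ) :
    ∀ m, ∀ hm : m < n, ∑ k ∈ Finset.range (m + 1), EF γ σ k = σ ⟨m, hm⟩ - γ ⟨m, hm⟩ := by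
  intro m
  induction m with
  | zero =>
      intro hm
      rw [Finset.sum_range_one]
      simp only [EF, dif_pos hm, flow, prev]
      norm_num
  | succ m ih =>
      intro hm
      rw [Finset.sum_range_succ, ih (Nat.lt_of_succ_lt hm)]
      have hE : EF γ σ (m + 1) = σ ⟨m + 1, hm⟩ - σ ⟨m, Nat.lt_of_succ_lt hm⟩
          - (γ ⟨m + 1, hm⟩ - γ ⟨m, Nat.lt_of_succ_lt hm⟩) := by
        show (if h : m + 1 < n then flow σ ⟨m + 1, h⟩ - flow γ ⟨m + 1, h⟩ else 0) = _
        rw [dif_pos hm]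
        show σ ⟨m + 1, hm⟩ - (if m + 1 = 0 then (0:ℝ) else σ ⟨m + 1 - 1, _⟩)
            - (γ ⟨m + 1, hm⟩ - (if m + 1 = 0 then (0:ℝ) else γ ⟨m + 1 - 1, _⟩)) = _
        simp only [Nat.succ_ne_zero, if_false]
        rfl
      rw [hE]
      ring

lemma extract (γ σ s d : Fin n → ℝ) (h : revChronApply s d γ = σ) :
    ∀ k, k < n → natF d k = EF γ σ k - natF s k +
      (if k = 0 then 0 else natF s (k - 1)) := by
  have H := (align_iff γ σ s d).mp h
  intro k hk
  cases k with
  | zero =>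
      have h0 := H ⟨0, hk⟩
      rw [Finset.sum_range_one] at h0
      have hE := tele γ σ 0 hk
      rw [Finset.sum_range_one] at hE
      simp only [if_pos rfl]
      have hs : natF s 0 = s ⟨0, hk⟩ := by simp [natF, hk]
      rw [hs, hE, h0]
      simp [natF, hk]
  | succ m =>
      have hm : m < n := by omega
      have h1 := H ⟨m + 1, hk⟩
      have h2 := H ⟨m, hm⟩
      rw [Finset.sum_range_succ] at h1
      have hE1 := tele γ σ (m + 1) hk
      have hE2 := tele γ σ m hm
      rw [Finset.sum_range_succ] at hE1
      have hif : (if m + 1 = 0 then (0:ℝ) else natF s (m + 1 - 1)) = natF s m := by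
        norm_num
      rw [hif]
      have hs1 : natF s (m + 1) = s ⟨m + 1, hk⟩ := by simp [natF, hk]
      have hs2 : natF s m = s ⟨m, hm⟩ := by simp [natF, hm]
      rw [hs1, hs2]
      have : ∑ k ∈ Finset.range (m + 1), natF d k = σ ⟨m, hm⟩ - γ ⟨m, hm⟩ - s ⟨m, hm⟩ := h2
      linarith

lemma claim (E t : ℕ → ℝ) :
    ∀ m k, k + m + 1 = n →
      (∑ i ∈ Finset.Ico (k + 1) n, |rhoF n E i|) +
        (|(E k + (if k = 0 then 0 else t (k - 1))) + rhoF n E (k + 1)|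
          + |E k + (if k = 0 then 0 else t (k - 1))| - |rhoF n E (k + 1)|) / 2
      ≤ ∑ i ∈ Finset.Ico k n, (|t i| + |E i - t i + (if i = 0 then 0 else t (i - 1))|) := by
  intro m
  induction m with
  | zero =>
      intro k hk
      have hk' : k < n := by omega
      have hkn : k + 1 = n := by omega
      rw [hkn, Finset.Ico_self, Finset.sum_empty, rhoF_neg (by omega : ¬ n < n)]
      rw [show Finset.Ico k n = {k} from by rw [← hkn]; exact Nat.Ico_succ_singleton k]
      rw [Finset.sum_singleton]
      have habs : |E k + (if k = 0 then 0 else t (k - 1))|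
          ≤ |t k| + |E k - t k + (if k = 0 then 0 else t (k - 1))| := by
        have h := abs_add_le (t k) (E k - t k + (if k = 0 then 0 else t (k - 1)))
        rw [show t k + (E k - t k + (if k = 0 then 0 else t (k - 1)))
            = E k + (if k = 0 then 0 else t (k - 1)) by ring] at h
        exact h
      simp only [abs_zero, add_zero]
      linarith
  | succ m ih =>
      intro k hk
      have hk1 : k < n := by omega
      have hk2 : k + 1 < n := by omega
      have IH := ih (k + 1) (by omega)
      simp only [Nat.succ_ne_zero, if_false, Nat.add_sub_cancel] at IH
      rw [Finset.sum_eq_sum_Ico_succ_bot hk1]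
      rw [Finset.sum_eq_sum_Ico_succ_bot hk2 (fun i => |rhoF n E i|)]
      have hrho : rhoF n E (k + 1) = resid (E (k + 1)) (rhoF n E (k + 2)) := rhoF_pos hk2
      have hC := core (E (k + 1)) (rhoF n E (k + 2)) (t k)
        (E k + (if k = 0 then 0 else t (k - 1)))
      rw [← hrho] at hC
      rw [show E k - t k + (if k = 0 then 0 else t (k - 1))
          = (E k + (if k = 0 then 0 else t (k - 1))) - t k by ring]
      linarith


noncomputable def SF (γ σ : Fin n → ℝ) : ℕ → ℝ :=
  fun k => EF γ σ k - rhoF n (EF γ σ) k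

noncomputable def DF (γ σ : Fin n → ℝ) : ℕ → ℝ :=
  fun k => rhoF n (EF γ σ) k + (if k = 0 then 0 else SF γ σ (k - 1))

lemma SF_facts (γ σ : Fin n → ℝ) {k : ℕ} (hk : k < n) :
    0 ≤ EF γ σ k * rhoF n (EF γ σ) k ∧ |rhoF n (EF γ σ) k| ≤ |EF γ σ k| ∧
      SF γ σ k * rhoF n (EF γ σ) (k + 1) ≤ 0 ∧
      |SF γ σ k| ≤ |rhoF n (EF γ σ) (k + 1)| := by
  have h := resid_facts (EF γ σ k) (rhoF n (EF γ σ) (k + 1))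
  rw [← rhoF_pos hk] at h
  exact ⟨h.1, h.2.1, by simpa [SF] using h.2.2.1, by simpa [SF] using h.2.2.2⟩

lemma sum_DF (γ σ : Fin n → ℝ) (j : Fin n) :
    ∑ k ∈ Finset.range ((j : ℕ) + 1), DF γ σ k = σ j - γ j - SF γ σ (j : ℕ) := by
  have h1 : ∑ k ∈ Finset.range ((j : ℕ) + 1), DF γ σ k
      = ∑ k ∈ Finset.range ((j : ℕ) + 1), rhoF n (EF γ σ) k
        + ∑ k ∈ Finset.range ((j : ℕ) + 1), (if k = 0 then (0:ℝ) else SF γ σ (k - 1)) := by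
    rw [← Finset.sum_add_distrib]
    exact Finset.sum_congr rfl (fun k _ => rfl)
  have h2 : ∑ k ∈ Finset.range ((j : ℕ) + 1), (if k = 0 then (0:ℝ) else SF γ σ (k - 1))
      = ∑ k ∈ Finset.range (j : ℕ), SF γ σ k := by
    rw [Finset.sum_range_succ']
    simp
  have h3 : ∑ k ∈ Finset.range ((j : ℕ) + 1), (rhoF n (EF γ σ) k + SF γ σ k)
      = σ j - γ j := by
    have h4 : ∀ k ∈ Finset.range ((j : ℕ) + 1),
        rhoF n (EF γ σ) k + SF γ σ k = EF γ σ k := by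
      intro k _
      simp only [SF]
      ring
    rw [Finset.sum_congr rfl h4]
    have h5 := tele γ σ (j : ℕ) j.isLt
    simpa using h5
  rw [Finset.sum_add_distrib] at h3
  have h5 := Finset.sum_range_succ (fun k => SF γ σ k) (j : ℕ)
  rw [h1, h2]
  linarith

lemma align_SD (γ σ : Fin n → ℝ) :
    revChronApply (fun i => SF γ σ (i : ℕ)) (fun i => DF γ σ (i : ℕ)) γ = σ := by
  apply (align_iff γ σ _ _).mpr
  intro j
  have hnat : ∀ k ∈ Finset.range ((j : ℕ) + 1),
      natF (fun i : Fin n => DF γ σ (i : ℕ)) k = DF γ σ k := by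
    intro k hk
    have hkn : k < n := by
      have := Finset.mem_range.mp hk
      have := j.isLt
      omega
    simp [natF, hkn]
  rw [Finset.sum_congr rfl hnat, sum_DF]

/-- every reverse chronological co-operative run aligning `γ` to `σ` can be
improved to a reverse chronological, co-operative and cross co-operative run (with a pure
delay at the last position) of at most the same cost. -/
theorem statement7 (n : ℕ) (γ σ : Fin n → ℝ) (s' d' : Fin n → ℝ)
    (halign : revChronApply s' d' γ = σ) (hcoop : Cooperative s' d') :
    ∃ s d : Fin n → ℝ, revChronApply s d γ = σ ∧ Cooperative s d ∧
      LastStampZero s ∧ CrossCooperative s d ∧ chronCost s d ≤ chronCost s' d' := by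
  rcases Nat.eq_zero_or_pos n with hn | hn
  · subst hn
    exact ⟨s', d', halign, hcoop, fun i => i.elim0, fun i => i.elim0, le_refl _⟩
  refine ⟨fun i => SF γ σ (i : ℕ), fun i => DF γ σ (i : ℕ), align_SD γ σ, ?_, ?_, ?_, ?_⟩
  · -- Cooperative
    intro i
    have hk : (i : ℕ) < n := i.isLt
    have hf := SF_facts γ σ hk
    have hs : 0 ≤ SF γ σ (i : ℕ) * rhoF n (EF γ σ) (i : ℕ) := by
      have := coop_helper hf.1 hf.2.1
      simpa [SF] using this
    have hd : 0 ≤ DF γ σ (i : ℕ) * rhoF n (EF γ σ) (i : ℕ) ∧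
        |DF γ σ (i : ℕ)| ≤ |rhoF n (EF γ σ) (i : ℕ)| := by
      by_cases h0 : (i : ℕ) = 0
      · constructor
        · simp only [DF, h0, if_pos, add_zero]
          exact mul_self_nonneg _
        · simp only [DF, h0, if_pos, add_zero]
          exact le_refl _
      · have hk1 : (i : ℕ) - 1 < n := by omega
        have hf1 := SF_facts γ σ hk1
        rw [show (i : ℕ) - 1 + 1 = (i : ℕ) by omega] at hf1
        have o := opp hf1.2.2.1 hf1.2.2.2
        have habs := abs_nonneg (SF γ σ ((i : ℕ) - 1))
        constructor
        · simp only [DF, if_neg h0]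
          exact o.2.1
        · simp only [DF, if_neg h0]
          linarith [o.1]
    rcases eq_or_ne (rhoF n (EF γ σ) (i : ℕ)) 0 with hz | hz
    · have hd0 : DF γ σ (i : ℕ) = 0 := by
        have h6 : |DF γ σ (i : ℕ)| ≤ 0 := by
          have := hd.2
          rwa [hz, abs_zero] at this
        exact abs_nonpos_iff.mp h6
      simp [hd0]
    · have hpos : 0 < rhoF n (EF γ σ) (i : ℕ) * rhoF n (EF γ σ) (i : ℕ) :=
        mul_self_pos.mpr hz
      nlinarith [mul_nonneg hs hd.1]
  · -- LastStampZero
    intro i hi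
    show SF γ σ (i : ℕ) = 0
    have hρ : rhoF n (EF γ σ) (i : ℕ) = EF γ σ (i : ℕ) := by
      rw [rhoF_pos i.isLt, hi, rhoF_neg (by omega : ¬ n < n), resid_zero]
    simp [SF, hρ]
  · -- CrossCooperative
    intro i h
    show SF γ σ (i : ℕ) * DF γ σ ((i : ℕ) + 1) ≤ 0
    have hf := SF_facts γ σ (i.isLt)
    have o := opp hf.2.2.1 hf.2.2.2
    have hD : DF γ σ ((i : ℕ) + 1)
        = rhoF n (EF γ σ) ((i : ℕ) + 1) + SF γ σ (i : ℕ) := by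
      simp [DF]
    rw [hD]
    exact o.2.2
  · -- cost
    have hc1 : chronCost (fun i : Fin n => SF γ σ (i : ℕ)) (fun i : Fin n => DF γ σ (i : ℕ))
        = ∑ k ∈ Finset.range n, (|SF γ σ k| + |DF γ σ k|) := by
      simpa [chronCost] using
        Fin.sum_univ_eq_sum_range (fun k => |SF γ σ k| + |DF γ σ k|) n
    have hterm : ∀ k ∈ Finset.range n, |SF γ σ k| + |DF γ σ k|
        ≤ (|rhoF n (EF γ σ) k| + |SF γ σ k|) - (if k = 0 then 0 else |SF γ σ (k - 1)|) := by
      intro k hk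
      by_cases h0 : k = 0
      · simp only [h0, DF, if_pos, add_zero, sub_zero]
        linarith
      · have hk1 : k - 1 < n := by
          have := Finset.mem_range.mp hk
          omega
        have hf1 := SF_facts γ σ hk1
        rw [show k - 1 + 1 = k by omega] at hf1
        have o := opp hf1.2.2.1 hf1.2.2.2
        simp only [DF, if_neg h0]
        linarith [o.1]
    have hsum1 := Finset.sum_le_sum hterm
    obtain ⟨m, rfl⟩ : ∃ m, n = m + 1 := ⟨n - 1, by omega⟩
    have hsp : ∑ k ∈ Finset.range (m + 1), (if k = 0 then (0:ℝ) else |SF γ σ (k - 1)|)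
        = ∑ k ∈ Finset.range m, |SF γ σ k| := by
      rw [Finset.sum_range_succ']
      simp
    have hlast : SF γ σ m = 0 := by
      have hρ : rhoF (m + 1) (EF γ σ) m = EF γ σ m := by
        rw [rhoF_pos (by omega : m < m + 1), rhoF_neg (by omega : ¬ m + 1 < m + 1),
          resid_zero]
      simp [SF, hρ]
    have hS : ∑ k ∈ Finset.range (m + 1), |SF γ σ k|
        = ∑ k ∈ Finset.range m, |SF γ σ k| := by
      rw [Finset.sum_range_succ, hlast, abs_zero, add_zero]
    have hsplit : ∑ k ∈ Finset.range (m + 1),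
        ((|rhoF (m + 1) (EF γ σ) k| + |SF γ σ k|) - (if k = 0 then 0 else |SF γ σ (k - 1)|))
        = ∑ k ∈ Finset.range (m + 1), (|rhoF (m + 1) (EF γ σ) k| + |SF γ σ k|)
          - ∑ k ∈ Finset.range (m + 1), (if k = 0 then (0:ℝ) else |SF γ σ (k - 1)|) :=
      Finset.sum_sub_distrib _ _
    have hsplit2 : ∑ k ∈ Finset.range (m + 1), (|rhoF (m + 1) (EF γ σ) k| + |SF γ σ k|)
        = ∑ k ∈ Finset.range (m + 1), |rhoF (m + 1) (EF γ σ) k|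
          + ∑ k ∈ Finset.range (m + 1), |SF γ σ k| := Finset.sum_add_distrib
    have hcost1 : ∑ k ∈ Finset.range (m + 1), (|SF γ σ k| + |DF γ σ k|)
        ≤ ∑ k ∈ Finset.range (m + 1), |rhoF (m + 1) (EF γ σ) k| := by
      rw [hsplit, hsplit2, hsp, hS] at hsum1
      linarith
    -- lower bound on cost of (s', d')
    have hch : chronCost s' d'
        = ∑ k ∈ Finset.range (m + 1), (|natF s' k| + |natF d' k|) := by
      have e1 : ∀ i : Fin (m + 1), |s' i| + |d' i|
          = (fun k => |natF s' k| + |natF d' k|) (i : ℕ) := by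
        intro i
        simp [natF, i.isLt]
      calc chronCost s' d' = ∑ i : Fin (m + 1), (|s' i| + |d' i|) := rfl
        _ = ∑ i : Fin (m + 1), (fun k => |natF s' k| + |natF d' k|) (i : ℕ) :=
            Finset.sum_congr rfl (fun i _ => e1 i)
        _ = ∑ k ∈ Finset.range (m + 1), (|natF s' k| + |natF d' k|) := by
            simpa using Fin.sum_univ_eq_sum_range (fun k => |natF s' k| + |natF d' k|) (m + 1)
    have hdd := extract γ σ s' d' halign
    have hch2 : chronCost s' d' = ∑ k ∈ Finset.range (m + 1),
        (|natF s' k| + |EF γ σ k - natF s' k + (if k = 0 then 0 else natF s' (k - 1))|) := by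
      rw [hch]
      apply Finset.sum_congr rfl
      intro k hk
      rw [hdd k (Finset.mem_range.mp hk)]
    have hclaim := claim (n := m + 1) (EF γ σ) (natF s') m 0 (by omega)
    simp only [if_pos, add_zero, Nat.zero_add] at hclaim
    have hr0 : rhoF (m + 1) (EF γ σ) 0
        = resid (EF γ σ 0) (rhoF (m + 1) (EF γ σ) 1) := rhoF_pos (by omega)
    have hrle := resid_le (EF γ σ 0) (rhoF (m + 1) (EF γ σ) 1)
    rw [← hr0] at hrle
    have hsum0 : ∑ k ∈ Finset.range (m + 1), |rhoF (m + 1) (EF γ σ) k|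
        = |rhoF (m + 1) (EF γ σ) 0| + ∑ i ∈ Finset.Ico 1 (m + 1), |rhoF (m + 1) (EF γ σ) i| := by
      rw [Finset.range_eq_Ico]
      exact Finset.sum_eq_sum_Ico_succ_bot (by omega) _
    have hsumI : ∑ i ∈ Finset.Ico 0 (m + 1),
        (|natF s' i| + |EF γ σ i - natF s' i + (if i = 0 then 0 else natF s' (i - 1))|)
        = ∑ k ∈ Finset.range (m + 1),
        (|natF s' k| + |EF γ σ k - natF s' k + (if k = 0 then 0 else natF s' (k - 1))|) := by
      rw [Finset.range_eq_Ico]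
    rw [hc1, hch2]
    rw [hsumI] at hclaim
    linarith


end TimedAlign
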